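/- Let φ be convex, lower semi-continuous with φ(1)=0, φ(x)=∞ for x<0, and suppose either lim_{t→∞} φ(t)/t < ∞, or lim_{t→∞} φ(t)/t = ∞ with dom(φ)=[0,∞). Let ν be a probability measure, f bounded measurable, and suppose for each η>0 the infimum over μ of μ + E_{z∼ν}[(ηφ)^*(f(z)−μ)] is attained at a finite μ_η^*. Then as η → 0⁺, inf_μ { μ + E_{z∼ν}[(ηφ)^*(f(z)−μ)] } converges to ess-sup_ν f. -/

import Mathlib

open MeasureTheory Filter
open scoped Classical

lemma affine_minorant_aux {φ : ℝ → ℝ} (hconv : ConvexOn ℝ (Set.Ici 0) φ) (hφ1 : φ 1 = 0) :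
    ∃ k b : ℝ, 0 ≤ b ∧ ∀ s : ℝ, 0 ≤ s → k * s - b ≤ φ s := by
  set k := φ 2 with hk
  set m := max (|φ 0|) (|φ 2|) with hm
  have key : ∀ x ∈ Set.Ici (0:ℝ), ∀ y ∈ Set.Ici (0:ℝ), ∀ a b : ℝ, 0 ≤ a → 0 ≤ b →
      a + b = 1 → φ (a * x + b * y) ≤ a * φ x + b * φ y := by
    intro x hx y hy a b ha hb hab
    simpa using hconv.2 hx hy ha hb hab
  refine ⟨k, max k (m + 2 * |k|), le_max_of_le_right (by positivity), ?_⟩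
  intro s hs
  have hmk : m + 2 * |k| ≤ max k (m + 2 * |k|) := le_max_right _ _
  rcases le_or_gt s 2 with h2 | h2
  · have hlow : -m ≤ φ s := by
      rcases le_or_gt s 1 with h1 | h1
      · have h2s : (0:ℝ) < 2 - s := by linarith
        have h2s' : (2:ℝ) - s ≠ 0 := ne_of_gt h2s
        have hcx := key s (Set.mem_Ici.2 hs) 2 (Set.mem_Ici.2 (by norm_num : (0:ℝ) ≤ 2))
          (1/(2-s)) ((1-s)/(2-s)) (by positivity)
          (div_nonneg (by linarith) (by linarith))
          (by rw [← add_div, show (1:ℝ)+(1-s) = 2-s by ring, div_self h2s'])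
        have h1' : (1/(2-s)) * s + ((1-s)/(2-s)) * (2:ℝ) = 1 := by
          field_simp; ring
        rw [h1', hφ1] at hcx
        rw [div_mul_eq_mul_div, div_mul_eq_mul_div, ← add_div, le_div_iff₀ h2s] at hcx
        have habs : (1-s) * φ 2 ≤ (1-s) * |φ 2| :=
          mul_le_mul_of_nonneg_left (le_abs_self _) (by linarith)
        have habs2 : (1-s) * |φ 2| ≤ 1 * |φ 2| :=
          mul_le_mul_of_nonneg_right (by linarith) (abs_nonneg _)
        have hmax : |φ 2| ≤ m := le_max_right _ _
        nlinarith
      · have hspos : (0:ℝ) < s := by linarith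
        have hcx := key 0 (Set.mem_Ici.2 (le_refl (0:ℝ))) s (Set.mem_Ici.2 hs)
          ((s-1)/s) (1/s) (div_nonneg (by linarith) hspos.le) (by positivity)
          (by rw [← add_div, show s-1+1 = s by ring, div_self (ne_of_gt hspos)])
        have h1' : ((s-1)/s) * (0:ℝ) + (1/s) * s = 1 := by field_simp; ring
        rw [h1', hφ1] at hcx
        rw [div_mul_eq_mul_div, div_mul_eq_mul_div, ← add_div, le_div_iff₀ hspos] at hcx
        have habs : (s-1) * φ 0 ≤ (s-1) * |φ 0| :=
          mul_le_mul_of_nonneg_left (le_abs_self _) (by linarith)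
        have habs2 : (s-1) * |φ 0| ≤ 1 * |φ 0| :=
          mul_le_mul_of_nonneg_right (by linarith) (abs_nonneg _)
        have hmax : |φ 0| ≤ m := le_max_left _ _
        nlinarith
    have hks : k * s ≤ 2 * |k| := by
      rcases abs_cases k with ⟨h, _⟩ | ⟨h, _⟩ <;> nlinarith
    nlinarith
  · have hs1 : (0:ℝ) < s - 1 := by linarith
    have hcx := key 1 (Set.mem_Ici.2 (by norm_num : (0:ℝ) ≤ 1)) s (Set.mem_Ici.2 hs)
      ((s-2)/(s-1)) (1/(s-1)) (div_nonneg (by linarith) (by linarith)) (by positivity)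
      (by rw [← add_div, show s-2+1 = s-1 by ring, div_self (ne_of_gt hs1)])
    have h1' : ((s-2)/(s-1)) * (1:ℝ) + (1/(s-1)) * s = 2 := by
      field_simp; ring
    rw [h1', hφ1, mul_zero, zero_add] at hcx
    rw [div_mul_eq_mul_div, le_div_iff₀ hs1] at hcx
    have : k ≤ max k (m + 2*|k|) := le_max_left _ _
    nlinarith

/-- consistency of the regularized value.  `φ` convex lsc, `φ(1)=0`, with
either `lim_{t→∞} φ(t)/t < ∞` or (`lim = ∞` and `dom φ = ℝ₊`, the latter automatic since `φ`
is real-valued on `[0,∞)` here).  `Obj η μ = μ + E_ν[(ηφ)^*(f − μ)]` as an extended real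
(`+∞` unless the conjugate term is a.e. finite and integrable; the integrand is bounded
below so this is the extended integral).  If for each `η > 0` the infimum over `μ` is
attained at a finite `μ*_η` with finite value, then the optimal value `V η` converges to
`ess-sup_ν f` as `η → 0⁺`. -/
theorem stmt12 {Z : Type*} [MeasurableSpace Z] (ν : Measure Z) [IsProbabilityMeasure ν]
    (f : Z → ℝ) (hf : Measurable f) (B : ℝ) (hfB : ∀ z, |f z| ≤ B)
    (φ : ℝ → ℝ) (hconv : ConvexOn ℝ (Set.Ici 0) φ)
    (hlsc : LowerSemicontinuousOn φ (Set.Ici 0)) (hφ1 : φ 1 = 0)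
    (hgrowth : (∃ C : ℝ, Tendsto (fun t => φ t / t) atTop (nhds C)) ∨
      Tendsto (fun t => φ t / t) atTop atTop)
    (conjE : ℝ → ℝ → EReal)
    (hconjE : ∀ η t : ℝ, conjE η t
      = ⨆ s : {s : ℝ // 0 ≤ s}, ((t * s.1 - η * φ s.1 : ℝ) : EReal))
    (Obj : ℝ → ℝ → EReal)
    (hObj : ∀ η μ : ℝ, Obj η μ =
      if (∀ᵐ z ∂ν, conjE η (f z - μ) ≠ ⊤) ∧
          Integrable (fun z => (conjE η (f z - μ)).toReal) ν
        then ((μ + ∫ z, (conjE η (f z - μ)).toReal ∂ν : ℝ) : EReal) else ⊤)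
    (hattain : ∀ η : ℝ, 0 < η → ∃ μ : ℝ, Obj η μ ≠ ⊤ ∧ ∀ μ' : ℝ, Obj η μ ≤ Obj η μ')
    (V : ℝ → ℝ)
    (hV : ∀ η : ℝ, 0 < η → (V η : EReal) = ⨅ μ : ℝ, Obj η μ) :
    Tendsto V (nhdsWithin 0 (Set.Ioi 0)) (nhds (essSup f ν)) := by
  obtain ⟨k, b, hb0, hkb⟩ := affine_minorant_aux hconv hφ1
  set M := essSup f ν with hM
  have hMls : (ae ν).limsup f = M := rfl
  have hbddU : IsBoundedUnder (· ≤ ·) (ae ν) f :=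
    isBoundedUnder_of ⟨B, fun z => (abs_le.1 (hfB z)).2⟩
  have hbddL : IsBoundedUnder (· ≥ ·) (ae ν) f :=
    isBoundedUnder_of ⟨-B, fun z => (abs_le.1 (hfB z)).1⟩
  -- pointwise facts about conjE
  have hge : ∀ η t s : ℝ, 0 ≤ s → ((t * s - η * φ s : ℝ) : EReal) ≤ conjE η t := by
    intro η t s hs
    rw [hconjE]
    exact le_iSup (fun s : {s : ℝ // 0 ≤ s} => ((t * s.1 - η * φ s.1 : ℝ) : EReal)) ⟨s, hs⟩
  have hget : ∀ η t : ℝ, ((t : ℝ) : EReal) ≤ conjE η t := by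
    intro η t
    simpa [hφ1] using hge η t 1 zero_le_one
  have hnebot : ∀ η t : ℝ, conjE η t ≠ ⊥ := by
    intro η t
    exact fun h => absurd (h ▸ hget η t) (by simp)
  have hmono : ∀ η : ℝ, 0 ≤ η → Monotone (conjE η) := by
    intro η hη t t' htt
    rw [hconjE, hconjE]
    exact iSup_mono fun s => EReal.coe_le_coe_iff.2 (by nlinarith [s.2])
  have hmeas : ∀ η μ : ℝ, 0 ≤ η → Measurable (fun z => (conjE η (f z - μ)).toReal) := by
    intro η μ hη
    exact Measurable.ereal_toReal ((hmono η hη).measurable.comp (hf.sub measurable_const))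
  have hub : ∀ η : ℝ, 0 < η → ∀ t : ℝ, t ≤ η * k → conjE η t ≤ ((η * b : ℝ) : EReal) := by
    intro η hη t ht
    rw [hconjE]
    refine iSup_le fun s => EReal.coe_le_coe_iff.2 ?_
    have h1 := hkb s.1 s.2
    nlinarith [s.2, mul_nonneg hη.le (sub_nonneg.2 h1), mul_nonneg (sub_nonneg.2 ht) s.2]
  -- upper bound on V
  have hupper : ∀ η : ℝ, 0 < η → ∀ μ : ℝ, (∀ᵐ z ∂ν, f z - μ ≤ η * k) →
      V η ≤ μ + η * b := by
    intro η hη μ hμae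
    have hfin : ∀ᵐ z ∂ν, conjE η (f z - μ) ≠ ⊤ := by
      filter_upwards [hμae] with z hz
      exact ((hub η hη _ hz).trans_lt (EReal.coe_lt_top _)).ne
    have htoReal_le : ∀ᵐ z ∂ν, (conjE η (f z - μ)).toReal ≤ η * b := by
      filter_upwards [hμae] with z hz
      have h := EReal.toReal_le_toReal (hub η hη _ hz) (hnebot η _) (EReal.coe_ne_top _)
      rwa [EReal.toReal_coe] at h
    have htoReal_ge : ∀ᵐ z ∂ν, f z - μ ≤ (conjE η (f z - μ)).toReal := by
      filter_upwards [hfin] with z hz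
      have h := EReal.toReal_le_toReal (hget η (f z - μ)) (EReal.coe_ne_bot _) hz
      rwa [EReal.toReal_coe] at h
    have hbnd : ∀ᵐ z ∂ν, ‖(conjE η (f z - μ)).toReal‖ ≤ max (B + |μ|) |η * b| := by
      filter_upwards [htoReal_le, htoReal_ge] with z h1 h2
      rw [Real.norm_eq_abs, abs_le]
      refine ⟨?_, h1.trans ((le_abs_self _).trans (le_max_right _ _))⟩
      have h3 := (abs_le.1 (hfB z)).1
      have h4 := le_abs_self μ
      have h5 := le_max_left (B + |μ|) |η * b|
      linarith
    have hint : Integrable (fun z => (conjE η (f z - μ)).toReal) ν :=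
      Integrable.mono' (integrable_const _) (hmeas η μ hη.le).aestronglyMeasurable hbnd
    have hObjval : Obj η μ = ((μ + ∫ z, (conjE η (f z - μ)).toReal ∂ν : ℝ) : EReal) := by
      rw [hObj]; exact if_pos ⟨hfin, hint⟩
    have hVle : (V η : EReal) ≤ Obj η μ := (hV η hη) ▸ iInf_le _ μ
    rw [hObjval] at hVle
    have hVle' := EReal.coe_le_coe_iff.1 hVle
    have hintle : ∫ z, (conjE η (f z - μ)).toReal ∂ν ≤ η * b := by
      have h := integral_mono_ae hint (integrable_const (η * b)) htoReal_le
      simpa using h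
    linarith
  -- lower bound on V
  have hlower : ∀ ε : ℝ, 0 < ε → ∃ c : ℝ, ∀ η : ℝ, 0 < η → M - ε - η * c ≤ V η := by
    intro ε hε
    set A := {z | M - ε < f z} with hA_def
    have hAmeas : MeasurableSet A := measurableSet_lt measurable_const hf
    have hA : ν A ≠ 0 := by
      intro h0
      have hae : ∀ᵐ z ∂ν, f z ≤ M - ε := by
        rw [ae_iff]
        convert h0 using 2
        ext z
        simp [hA_def, not_le]
      have h1 : M ≤ M - ε := limsup_le_of_le hbddL.isCoboundedUnder_le hae
      linarith
    set p := (ν A).toReal with hp_def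
    have hp : 0 < p := ENNReal.toReal_pos hA (measure_ne_top ν A)
    have hintf : Integrable f ν :=
      Integrable.mono' (integrable_const B) hf.aestronglyMeasurable
        (Eventually.of_forall fun z => by rw [Real.norm_eq_abs]; exact hfB z)
    set c := max (φ (1/p)) (φ 0) with hc_def
    refine ⟨c, ?_⟩
    intro η hη
    have hcle : ∀ μ : ℝ, ((M - ε - η * c : ℝ) : EReal) ≤ Obj η μ := by
      intro μ
      rw [hObj]
      split_ifs with h
      · obtain ⟨hfin, hint⟩ := h
        set g1 : Z → ℝ := A.indicator (fun z => (1/p) * (f z - μ)) with hg1_def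
        have hg1int : Integrable g1 ν :=
          (((hintf.sub (integrable_const μ)).const_mul (1/p)).indicator hAmeas)
        have hptwise : ∀ᵐ z ∂ν, g1 z - η * c ≤ (conjE η (f z - μ)).toReal := by
          filter_upwards [hfin] with z hz
          set sz : ℝ := if z ∈ A then 1/p else 0 with hsz_def
          have hsz : (0:ℝ) ≤ sz := by
            rw [hsz_def]; split_ifs
            · positivity
            · exact le_refl 0
          have key := hge η (f z - μ) sz hsz
          have h2 : g1 z - η * c ≤ (f z - μ) * sz - η * φ sz := by
            have hφc : φ sz ≤ c := by
              rw [hsz_def]; split_ifs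
              · exact le_max_left _ _
              · exact le_max_right _ _
            have hηφ : η * φ sz ≤ η * c := mul_le_mul_of_nonneg_left hφc hη.le
            by_cases hzA : z ∈ A
            · rw [hg1_def, Set.indicator_of_mem hzA, hsz_def, if_pos hzA] at *
              nlinarith [hηφ]
            · rw [hg1_def, Set.indicator_of_notMem hzA, hsz_def, if_neg hzA] at *
              nlinarith [hηφ]
          have key' : ((g1 z - η * c : ℝ) : EReal) ≤ conjE η (f z - μ) :=
            le_trans (EReal.coe_le_coe_iff.2 h2) key
          have h3 := EReal.toReal_le_toReal key' (EReal.coe_ne_bot _) hz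
          rwa [EReal.toReal_coe] at h3
        have hintge : ∫ z, (conjE η (f z - μ)).toReal ∂ν ≥ (M - ε - μ) - η * c := by
          have h1 : ∫ z, (g1 z - η * c) ∂ν ≤ ∫ z, (conjE η (f z - μ)).toReal ∂ν :=
            integral_mono_ae (hg1int.sub (integrable_const _)) hint hptwise
          have h2 : ∫ z, (g1 z - η * c) ∂ν = (∫ z, g1 z ∂ν) - η * c := by
            rw [integral_sub hg1int (integrable_const _)]
            simp [measure_univ]
          have h3 : ∫ z, g1 z ∂ν = ∫ z in A, (1/p) * (f z - μ) ∂ν := by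
            rw [hg1_def, integral_indicator hAmeas]
          have h4 : (1/p) * (M - ε - μ) * p ≤ ∫ z in A, (1/p) * (f z - μ) ∂ν := by
            have h5 : ∫ z in A, ((1/p) * (M - ε - μ)) ∂ν ≤ ∫ z in A, (1/p) * (f z - μ) ∂ν := by
              refine setIntegral_mono_on (integrableOn_const (measure_lt_top ν A).ne)
                (((hintf.sub (integrable_const μ)).const_mul (1/p)).integrableOn) hAmeas ?_
              intro z hz
              have : M - ε < f z := hz
              have hps : (0:ℝ) ≤ 1/p := by positivity
              nlinarith
            rw [setIntegral_const] at h5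
            rw [smul_eq_mul] at h5
            calc (1/p) * (M - ε - μ) * p = p * ((1/p) * (M - ε - μ)) := by ring
            _ ≤ _ := h5
          have h6 : (1/p) * (M - ε - μ) * p = M - ε - μ := by
            field_simp
          linarith
        refine EReal.coe_le_coe_iff.2 ?_
        linarith
      · exact le_top
    have h7 := le_iInf hcle
    rw [← hV η hη] at h7
    exact EReal.coe_le_coe_iff.1 h7
  -- assemble
  rw [Metric.tendsto_nhdsWithin_nhds]
  intro ε hε
  have hε4 : 0 < ε/4 := by linarith
  obtain ⟨c, hc⟩ := hlower (ε/4) hε4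
  refine ⟨min (ε/4 / (|k|+1)) (min (ε/4/(|b|+1)) (ε/4/(|c|+1))), by positivity, ?_⟩
  intro η hηmem hdist
  have hη : 0 < η := hηmem
  rw [Real.dist_eq, sub_zero, abs_of_pos hη] at hdist
  have hηk : η * |k| < ε/4 := by
    have h1 : η < ε/4 / (|k|+1) := lt_of_lt_of_le hdist (min_le_left _ _)
    have h2 : η * (|k|+1) < ε/4 := (lt_div_iff₀ (by positivity)).1 h1
    nlinarith [abs_nonneg k]
  have hηb : η * |b| < ε/4 := by
    have h1 : η < ε/4 / (|b|+1) := lt_of_lt_of_le hdist ((min_le_right _ _).trans (min_le_left _ _))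
    have h2 : η * (|b|+1) < ε/4 := (lt_div_iff₀ (by positivity)).1 h1
    nlinarith [abs_nonneg b]
  have hηc : η * |c| < ε/4 := by
    have h1 : η < ε/4 / (|c|+1) := lt_of_lt_of_le hdist ((min_le_right _ _).trans (min_le_right _ _))
    have h2 : η * (|c|+1) < ε/4 := (lt_div_iff₀ (by positivity)).1 h1
    nlinarith [abs_nonneg c]
  have hηk' : -(ε/4) < η * k := by nlinarith [neg_abs_le k, abs_nonneg k]
  -- upper bound
  have hae : ∀ᵐ z ∂ν, f z - (M + ε/4) ≤ η * k := by
    have hlt : (ae ν).limsup f < M + ε/4 + η * k := by rw [hMls]; linarith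
    filter_upwards [eventually_lt_of_limsup_lt hlt hbddU] with z hz
    linarith
  have hup := hupper η hη (M + ε/4) hae
  have hlo := hc η hη
  rw [Real.dist_eq, abs_lt]
  have hbb : η * b ≤ η * |b| := mul_le_mul_of_nonneg_left (le_abs_self b) hη.le
  have hcc : -(η * |c|) ≤ η * c := by nlinarith [neg_abs_le c]
  have hcc2 : η * c ≤ η * |c| := mul_le_mul_of_nonneg_left (le_abs_self c) hη.le
  constructor
  · linarith
  · linarith
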